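/- Let h:ℝⁿ→ℝ^{mE} and g:ℝⁿ→ℝ^{mI} be continuously differentiable and suppose x* is a local minimizer of the ℓ₁ constraint violation c. Then there exist scalars ξ_i ∈ [−1,1] for each i with h_i(x*)=0 and η_i ∈ [−1,0] for each i with g_i(x*)=0 such that Σ_{i: h_i(x*)>0} ∇h_i(x*) − Σ_{i: h_i(x*)<0} ∇h_i(x*) + Σ_{i: h_i(x*)=0} ξ_i ∇h_i(x*) − Σ_{i: g_i(x*)<0} ∇g_i(x*) + Σ_{i: g_i(x*)=0} η_i ∇g_i(x*) = 0. -/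

import Mathlib

open RealInnerProductSpace

section aux

open Filter Set

variable {E : Type*} [NormedAddCommGroup E] [InnerProductSpace ℝ E]

lemma aux_slope (f : E → ℝ) (hf : Differentiable ℝ f) (x d : E) :
    Tendsto (fun t : ℝ => (f (x + t • d) - f x) / t) (nhdsWithin 0 (Set.Ioi 0))
      (nhds (fderiv ℝ f x d)) := by
  have hp : HasDerivAt (fun t : ℝ => x + t • d) d 0 := by
    simpa using ((hasDerivAt_id (0:ℝ)).smul_const d).const_add x
  have h1 : HasDerivAt (fun t : ℝ => f (x + t • d)) (fderiv ℝ f x d) 0 := by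
    have h2 := (hf (x + (0:ℝ) • d)).hasFDerivAt.comp_hasDerivAt 0 hp
    simp only [zero_smul, add_zero] at h2
    exact h2
  have h3 := hasDerivAt_iff_tendsto_slope.mp h1
  have h4 : Tendsto (slope (fun t : ℝ => f (x + t • d)) 0) (nhdsWithin 0 (Set.Ioi 0))
      (nhds (fderiv ℝ f x d)) :=
    h3.mono_left (nhdsWithin_mono _ (fun t ht => Set.mem_compl_singleton_iff.mpr (ne_of_gt ht)))
  refine h4.congr (fun t => ?_)
  simp [slope_def_field, div_eq_div_iff]

lemma aux_cont (f : E → ℝ) (hf : Differentiable ℝ f) (x d : E) :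
    Tendsto (fun t : ℝ => f (x + t • d)) (nhdsWithin 0 (Set.Ioi 0)) (nhds (f x)) := by
  have h1 : Continuous fun t : ℝ => f (x + t • d) :=
    hf.continuous.comp (continuous_const.add (continuous_id.smul continuous_const))
  have h2 := h1.tendsto 0
  simp only [zero_smul, add_zero] at h2
  exact h2.mono_left nhdsWithin_le_nhds

lemma aux_hterm (f : E → ℝ) (hf : Differentiable ℝ f) (x d : E) :
    Tendsto (fun t : ℝ => (|f (x + t • d)| - |f x|) / t) (nhdsWithin 0 (Set.Ioi 0))
      (nhds (if 0 < f x then fderiv ℝ f x d else if f x < 0 then -(fderiv ℝ f x d)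
        else |fderiv ℝ f x d|)) := by
  have hs := aux_slope f hf x d
  have hc := aux_cont f hf x d
  rcases lt_trichotomy (f x) 0 with hneg | hzero | hpos
  · rw [if_neg (by linarith), if_pos hneg]
    have hev : ∀ᶠ t in nhdsWithin (0:ℝ) (Set.Ioi 0), f (x + t • d) < 0 :=
      hc.eventually (eventually_lt_nhds hneg)
    refine Tendsto.congr' ?_ hs.neg
    filter_upwards [hev] with t ht
    rw [abs_of_neg ht, abs_of_neg hneg]
    ring
  · rw [if_neg (by simp [hzero]), if_neg (by simp [hzero])]
    refine Tendsto.congr' ?_ hs.abs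
    filter_upwards [self_mem_nhdsWithin] with t ht
    rw [abs_div, abs_of_pos (show (0:ℝ) < t from ht), hzero, abs_zero, sub_zero, sub_zero]
  · rw [if_pos hpos]
    have hev : ∀ᶠ t in nhdsWithin (0:ℝ) (Set.Ioi 0), 0 < f (x + t • d) :=
      hc.eventually (eventually_gt_nhds hpos)
    refine Tendsto.congr' ?_ hs
    filter_upwards [hev] with t ht
    rw [abs_of_pos ht, abs_of_pos hpos]

lemma aux_gterm (f : E → ℝ) (hf : Differentiable ℝ f) (x d : E) :
    Tendsto (fun t : ℝ => (max 0 (-(f (x + t • d))) - max 0 (-(f x))) / t)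
      (nhdsWithin 0 (Set.Ioi 0))
      (nhds (if f x < 0 then -(fderiv ℝ f x d) else if 0 < f x then 0
        else max 0 (-(fderiv ℝ f x d)))) := by
  have hs := aux_slope f hf x d
  have hc := aux_cont f hf x d
  rcases lt_trichotomy (f x) 0 with hneg | hzero | hpos
  · rw [if_pos hneg]
    have hev : ∀ᶠ t in nhdsWithin (0:ℝ) (Set.Ioi 0), f (x + t • d) < 0 :=
      hc.eventually (eventually_lt_nhds hneg)
    refine Tendsto.congr' ?_ hs.neg
    filter_upwards [hev] with t ht
    rw [max_eq_right (by linarith), max_eq_right (by linarith)]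
    ring
  · rw [if_neg (by simp [hzero]), if_neg (by simp [hzero])]
    have htend : Tendsto (fun t : ℝ => max 0 (-((f (x + t • d) - f x) / t)))
        (nhdsWithin 0 (Set.Ioi 0)) (nhds (max 0 (-(fderiv ℝ f x d)))) :=
      tendsto_const_nhds.max hs.neg
    refine Tendsto.congr' ?_ htend
    filter_upwards [self_mem_nhdsWithin] with t ht
    rw [hzero, neg_zero, max_self, sub_zero, sub_zero, ← neg_div,
      ← max_div_div_right (le_of_lt ht) 0 (-(f (x + t • d))), zero_div]
  · rw [if_neg (by linarith), if_pos hpos]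
    have hev : ∀ᶠ t in nhdsWithin (0:ℝ) (Set.Ioi 0), 0 < f (x + t • d) :=
      hc.eventually (eventually_gt_nhds hpos)
    refine Tendsto.congr' ?_ tendsto_const_nhds
    filter_upwards [hev] with t ht
    rw [max_eq_left (by linarith), max_eq_left (by linarith)]
    simp

end aux

theorem stmt6 {n mE mI : ℕ}
    (h : Fin mE → EuclideanSpace ℝ (Fin n) → ℝ)
    (g : Fin mI → EuclideanSpace ℝ (Fin n) → ℝ)
    (hh : ∀ i, ContDiff ℝ 1 (h i)) (hg : ∀ i, ContDiff ℝ 1 (g i))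
    (xs : EuclideanSpace ℝ (Fin n))
    (hmin : IsLocalMin (fun x => (∑ i, |h i x|) + ∑ i, max 0 (-(g i x))) xs) :
    ∃ (ξ : Fin mE → ℝ) (η : Fin mI → ℝ),
      (∀ i, 0 < h i xs → ξ i = 1) ∧
      (∀ i, h i xs < 0 → ξ i = -1) ∧
      (∀ i, h i xs = 0 → ξ i ∈ Set.Icc (-1 : ℝ) 1) ∧
      (∀ i, g i xs < 0 → η i = -1) ∧
      (∀ i, 0 < g i xs → η i = 0) ∧
      (∀ i, g i xs = 0 → η i ∈ Set.Icc (-1 : ℝ) 0) ∧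
      (∑ i, ξ i • gradient (h i) xs) + (∑ i, η i • gradient (g i) xs) = 0 := by
  classical
  have hdh : ∀ i, Differentiable ℝ (h i) := fun i => (hh i).differentiable one_ne_zero
  have hdg : ∀ i, Differentiable ℝ (g i) := fun i => (hg i).differentiable one_ne_zero
  -- Claim A: the directional derivative of the penalty is nonnegative in every direction
  have claimA : ∀ d : EuclideanSpace ℝ (Fin n),
      0 ≤ (∑ i, (if 0 < h i xs then fderiv ℝ (h i) xs d else if h i xs < 0
            then -(fderiv ℝ (h i) xs d) else |fderiv ℝ (h i) xs d|))
        + ∑ i, (if g i xs < 0 then -(fderiv ℝ (g i) xs d) else if 0 < g i xs then 0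
            else max 0 (-(fderiv ℝ (g i) xs d))) := by
    intro d
    have hT : Filter.Tendsto (fun t : ℝ =>
        (((∑ i, |h i (xs + t • d)|) + ∑ i, max 0 (-(g i (xs + t • d))))
          - ((∑ i, |h i xs|) + ∑ i, max 0 (-(g i xs)))) / t)
        (nhdsWithin 0 (Set.Ioi 0))
        (nhds ((∑ i, (if 0 < h i xs then fderiv ℝ (h i) xs d else if h i xs < 0
            then -(fderiv ℝ (h i) xs d) else |fderiv ℝ (h i) xs d|))
          + ∑ i, (if g i xs < 0 then -(fderiv ℝ (g i) xs d) else if 0 < g i xs then 0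
            else max 0 (-(fderiv ℝ (g i) xs d))))) := by
      have h1 := Filter.Tendsto.add
        (tendsto_finset_sum Finset.univ (fun i _ => aux_hterm (h i) (hdh i) xs d))
        (tendsto_finset_sum Finset.univ (fun i _ => aux_gterm (g i) (hdg i) xs d))
      refine h1.congr (fun t => ?_)
      rw [← Finset.sum_div, ← Finset.sum_div, Finset.sum_sub_distrib,
        Finset.sum_sub_distrib]
      ring
    have hmap : Filter.Tendsto (fun t : ℝ => xs + t • d) (nhdsWithin 0 (Set.Ioi 0))
        (nhds xs) := by
      have h1 : Continuous fun t : ℝ => xs + t • d :=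
        continuous_const.add (continuous_id.smul continuous_const)
      have h2 := h1.tendsto 0
      simp only [zero_smul, add_zero] at h2
      exact h2.mono_left nhdsWithin_le_nhds
    have hev : ∀ᶠ t in nhdsWithin (0:ℝ) (Set.Ioi 0),
        0 ≤ (((∑ i, |h i (xs + t • d)|) + ∑ i, max 0 (-(g i (xs + t • d))))
          - ((∑ i, |h i xs|) + ∑ i, max 0 (-(g i xs)))) / t := by
      filter_upwards [hmap.eventually hmin, self_mem_nhdsWithin] with t h1 h2
      exact div_nonneg (sub_nonneg.2 h1) (le_of_lt h2)
    exact ge_of_tendsto hT hev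
  -- Setup the compact convex set of admissible multipliers
  set v : Fin mE → EuclideanSpace ℝ (Fin n) := fun i => gradient (h i) xs with hv
  set w : Fin mI → EuclideanSpace ℝ (Fin n) := fun i => gradient (g i) xs with hw
  set Cξ : Fin mE → Set ℝ := fun i =>
    if 0 < h i xs then {1} else if h i xs < 0 then {-1} else Set.Icc (-1) 1 with hCξ
  set Cη : Fin mI → Set ℝ := fun i =>
    if g i xs < 0 then {-1} else if 0 < g i xs then {0} else Set.Icc (-1) 0 with hCη
  set S : Set ((Fin mE → ℝ) × (Fin mI → ℝ)) :=
    (Set.univ.pi Cξ) ×ˢ (Set.univ.pi Cη) with hS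
  have hSconv : Convex ℝ S := by
    refine Convex.prod (convex_pi fun i _ => ?_) (convex_pi fun i _ => ?_)
    · simp only [hCξ]; split_ifs <;> first | exact convex_singleton _ | exact convex_Icc _ _
    · simp only [hCη]; split_ifs <;> first | exact convex_singleton _ | exact convex_Icc _ _
  have hScomp : IsCompact S := by
    refine IsCompact.prod (isCompact_univ_pi fun i => ?_) (isCompact_univ_pi fun i => ?_)
    · simp only [hCξ]; split_ifs <;> first | exact isCompact_singleton | exact isCompact_Icc
    · simp only [hCη]; split_ifs <;> first | exact isCompact_singleton | exact isCompact_Icc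
  set Φ : ((Fin mE → ℝ) × (Fin mI → ℝ)) →ₗ[ℝ] EuclideanSpace ℝ (Fin n) :=
    { toFun := fun p => (∑ i, p.1 i • v i) + ∑ i, p.2 i • w i
      map_add' := by
        intro p q
        simp only [Prod.fst_add, Prod.snd_add, Pi.add_apply, add_smul,
          Finset.sum_add_distrib]
        abel
      map_smul' := by
        intro c p
        simp only [Prod.smul_fst, Prod.smul_snd, Pi.smul_apply, smul_eq_mul,
          RingHom.id_apply, smul_add, Finset.smul_sum, smul_smul] } with hΦ
  set K : Set (EuclideanSpace ℝ (Fin n)) := Φ '' S with hK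
  have hKconv : Convex ℝ K := hSconv.linear_image Φ
  have hKclosed : IsClosed K :=
    (hScomp.image Φ.continuous_of_finiteDimensional).isClosed
  have h0K : (0 : EuclideanSpace ℝ (Fin n)) ∈ K := by
    by_contra h0
    obtain ⟨f, u, hfu, hu0⟩ := geometric_hahn_banach_closed_point hKconv hKclosed h0
    rw [map_zero] at hu0
    -- the separating functional, realized as a vector
    set dvec : EuclideanSpace ℝ (Fin n) := (InnerProductSpace.toDual ℝ _).symm f with hdvec
    have hfv : ∀ i, f (v i) = fderiv ℝ (h i) xs dvec := by
      intro i
      have h1 : ⟪dvec, v i⟫ = f (v i) := InnerProductSpace.toDual_symm_apply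
      have h2 : ⟪v i, dvec⟫ = fderiv ℝ (h i) xs dvec := by
        simp only [hv, gradient]
        exact InnerProductSpace.toDual_symm_apply
      rw [← h1, real_inner_comm, h2]
    have hfw : ∀ i, f (w i) = fderiv ℝ (g i) xs dvec := by
      intro i
      have h1 : ⟪dvec, w i⟫ = f (w i) := InnerProductSpace.toDual_symm_apply
      have h2 : ⟪w i, dvec⟫ = fderiv ℝ (g i) xs dvec := by
        simp only [hw, gradient]
        exact InnerProductSpace.toDual_symm_apply
      rw [← h1, real_inner_comm, h2]
    -- choose the worst-case multipliers in direction dvec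
    set ξ₀ : Fin mE → ℝ := fun i => if 0 < h i xs then 1 else if h i xs < 0 then -1
      else (if 0 ≤ fderiv ℝ (h i) xs dvec then 1 else -1) with hξ₀
    set η₀ : Fin mI → ℝ := fun i => if g i xs < 0 then -1 else if 0 < g i xs then 0
      else (if fderiv ℝ (g i) xs dvec ≤ 0 then -1 else 0) with hη₀
    have hmem : (ξ₀, η₀) ∈ S := by
      constructor
      · intro i _
        simp only [hCξ, hξ₀]
        split_ifs with h1 h2 h3
        · exact rfl
        · exact rfl
        · exact ⟨by norm_num, le_refl 1⟩
        · exact ⟨le_refl (-1), by norm_num⟩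
      · intro i _
        simp only [hCη, hη₀]
        split_ifs with h1 h2 h3
        · exact rfl
        · exact rfl
        · exact ⟨le_refl (-1), by norm_num⟩
        · exact ⟨by norm_num, le_refl 0⟩
    have hlt : f (Φ (ξ₀, η₀)) < u := hfu _ (Set.mem_image_of_mem Φ hmem)
    have heq : f (Φ (ξ₀, η₀))
        = (∑ i, (if 0 < h i xs then fderiv ℝ (h i) xs dvec else if h i xs < 0
            then -(fderiv ℝ (h i) xs dvec) else |fderiv ℝ (h i) xs dvec|))
          + ∑ i, (if g i xs < 0 then -(fderiv ℝ (g i) xs dvec) else if 0 < g i xs then 0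
            else max 0 (-(fderiv ℝ (g i) xs dvec))) := by
      have hΦval : Φ (ξ₀, η₀) = (∑ i, ξ₀ i • v i) + ∑ i, η₀ i • w i := rfl
      rw [hΦval, map_add, map_sum, map_sum]
      congr 1
      · refine Finset.sum_congr rfl (fun i _ => ?_)
        rw [map_smul, smul_eq_mul, hfv i]
        simp only [hξ₀]
        split_ifs with h1 h2 h3
        · rw [one_mul]
        · rw [neg_one_mul]
        · rw [one_mul, abs_of_nonneg h3]
        · rw [neg_one_mul, abs_of_neg (lt_of_not_ge h3)]
      · refine Finset.sum_congr rfl (fun i _ => ?_)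
        rw [map_smul, smul_eq_mul, hfw i]
        simp only [hη₀]
        split_ifs with h1 h2 h3
        · rw [neg_one_mul]
        · rw [zero_mul]
        · rw [neg_one_mul, max_eq_right (by linarith : (0:ℝ) ≤ -(fderiv ℝ (g i) xs dvec))]
        · rw [zero_mul, max_eq_left
            (by have := lt_of_not_ge h3; linarith : -(fderiv ℝ (g i) xs dvec) ≤ 0)]
    have := claimA dvec
    rw [heq] at hlt
    linarith
  obtain ⟨p, hpS, hp0⟩ := h0K
  refine ⟨p.1, p.2, ?_, ?_, ?_, ?_, ?_, ?_, ?_⟩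
  · intro i hi
    have := hpS.1 i (Set.mem_univ i)
    simp only [hCξ, if_pos hi] at this
    exact this
  · intro i hi
    have := hpS.1 i (Set.mem_univ i)
    simp only [hCξ, if_neg (asymm hi), if_pos hi] at this
    exact this
  · intro i hi
    have := hpS.1 i (Set.mem_univ i)
    simp only [hCξ] at this
    rw [if_neg (by rw [hi]; exact lt_irrefl 0), if_neg (by rw [hi]; exact lt_irrefl 0)] at this
    exact this
  · intro i hi
    have := hpS.2 i (Set.mem_univ i)
    simp only [hCη, if_pos hi] at this
    exact this
  · intro i hi
    have := hpS.2 i (Set.mem_univ i)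
    simp only [hCη, if_neg (asymm hi), if_pos hi] at this
    exact this
  · intro i hi
    have := hpS.2 i (Set.mem_univ i)
    simp only [hCη] at this
    rw [if_neg (by rw [hi]; exact lt_irrefl 0), if_neg (by rw [hi]; exact lt_irrefl 0)] at this
    exact this
  · exact hp0
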